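/- arXiv:2304.02258 — 8 statements merged into one kernel-verified Lean document; each statement's English description precedes it below -/
import Mathlib

section
/- For every finite simple graph G there exists a 2-coloring such that strictly more than half of the vertices are under weak-majority illusion, i.e., the majority winner among their neighbors (possibly a tie) differs from the majority winner of the whole vertex set (possibly a tie). -/
open Finset

variable {V : Type*} [Fintype V] [DecidableEq V]

/-- The strict majority color of a finite set of agents (`true` = red, `false` = blue),
or `none` in case of a tie. -/
def maj (c : V → Bool) (s : Finset V) : Option Bool :=
  if 2 * (s.filter fun v => c v = true).card > s.card then some true
  else if 2 * (s.filter fun v => c v = false).card > s.card then some false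
  else none

/-- Vertex `i` is under weak-majority illusion: the majority winner (possibly a tie)
of its neighborhood differs from the global one. -/
def weakIll (G : SimpleGraph V) [DecidableRel G.Adj] (c : V → Bool) (i : V) : Prop :=
  maj c (G.neighborFinset i) ≠ maj c Finset.univ

/-- Vertex `i` is under strict majority illusion: neither its neighborhood nor the whole
graph is tied, and their majority winners differ. -/
def strictIll (G : SimpleGraph V) [DecidableRel G.Adj] (c : V → Bool) (i : V) : Prop :=
  maj c (G.neighborFinset i) ≠ none ∧ maj c Finset.univ ≠ none ∧
    maj c (G.neighborFinset i) ≠ maj c Finset.univ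

instance (G : SimpleGraph V) [DecidableRel G.Adj] (c : V → Bool) :
    DecidablePred (weakIll G c) := fun _ => by unfold weakIll; infer_instance

instance (G : SimpleGraph V) [DecidableRel G.Adj] (c : V → Bool) :
    DecidablePred (strictIll G c) := fun _ => by unfold strictIll; infer_instance

/-! ### Auxiliary definitions for the proof -/

section Aux

variable (G : SimpleGraph V) [DecidableRel G.Adj]

/-- Number of neighbors of `u` with a different color. -/
def diffNb (c : V → Bool) (u : V) : ℕ :=
  ((G.neighborFinset u).filter fun w => c w ≠ c u).card

/-- Number of neighbors of `u` with the same color. -/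
def sameNb (c : V → Bool) (u : V) : ℕ :=
  ((G.neighborFinset u).filter fun w => c w = c u).card

/-- Total (vertex-summed) cut size of a coloring. -/
def cutF (c : V → Bool) : ℕ := ∑ u : V, diffNb G c u

/-- Number of red vertices. -/
def redC (c : V → Bool) : ℕ := (univ.filter fun v => c v = true).card

/-- Lexicographic score: first cut size, then number of reds. -/
def score (c : V → Bool) : ℕ := (Fintype.card V + 1) * cutF G c + redC c

lemma same_add_diff (c : V → Bool) (u : V) :
    sameNb G c u + diffNb G c u = (G.neighborFinset u).card := by
  classical
  simpa [sameNb, diffNb, ne_eq] using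
    Finset.card_filter_add_card_filter_not (s := G.neighborFinset u)
      (p := fun w => c w = c u)

lemma red_add_blue (c : V → Bool) (s : Finset V) :
    (s.filter fun v => c v = true).card + (s.filter fun v => c v = false).card = s.card := by
  classical
  simpa [Bool.not_eq_true] using
    Finset.card_filter_add_card_filter_not (s := s) (p := fun v => c v = true)

/-- Key flip identity: flipping the color of `v` changes the cut by
`2 * (sameNb v - diffNb v)`. -/
lemma cut_flip (c : V → Bool) (v : V) :
    cutF G (Function.update c v (!c v)) + 2 * diffNb G c v
      = cutF G c + 2 * sameNb G c v := by
  classical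
  set c' := Function.update c v (!c v) with hc'def
  have hne : ∀ w, w ≠ v → c' w = c w := fun w hw => Function.update_of_ne hw _ _
  have hvv : c' v = !c v := Function.update_self _ _ _
  have hvnot : v ∉ G.neighborFinset v := by
    simp [SimpleGraph.mem_neighborFinset]
  -- the term at `v`
  have htermv : ((G.neighborFinset v).filter fun w => c' w ≠ c' v).card = sameNb G c v := by
    have : ((G.neighborFinset v).filter fun w => c' w ≠ c' v)
        = (G.neighborFinset v).filter fun w => c w = c v := by
      apply Finset.filter_congr
      intro w hw
      have hwv : w ≠ v := by rintro rfl; exact hvnot hw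
      rw [hne w hwv, hvv]
      cases hcw : c w <;> cases hcv : c v <;> simp
    rw [this]; rfl
  -- the terms at `u ≠ v`
  have key : ∀ u, u ≠ v →
      ((((G.neighborFinset u).filter fun w => c' w ≠ c' u).card : ℤ))
        = (((G.neighborFinset u).filter fun w => c w ≠ c u).card : ℤ)
          + (if v ∈ G.neighborFinset u then (if c v = c u then 1 else -1) else 0) := by
    intro u hu
    have hcu' : c' u = c u := hne u hu
    by_cases hadj : v ∈ G.neighborFinset u
    · by_cases hsame : c v = c u
      · rw [if_pos hadj, if_pos hsame]
        have hset : ((G.neighborFinset u).filter fun w => c' w ≠ c' u)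
            = insert v ((G.neighborFinset u).filter fun w => c w ≠ c u) := by
          ext w
          by_cases hw : w = v
          · subst hw
            have : c' w ≠ c' u := by
              rw [hvv, hcu', ← hsame]
              cases hb : c w <;> simp [hb]
            simp [hadj, this]
          · simp [Finset.mem_insert, hw, hne w hw, hcu']
        have hvmem : v ∉ ((G.neighborFinset u).filter fun w => c w ≠ c u) := by
          simp [hsame]
        rw [hset, Finset.card_insert_of_notMem hvmem]
        push_cast; ring
      · rw [if_pos hadj, if_neg hsame]
        have hset : ((G.neighborFinset u).filter fun w => c' w ≠ c' u)
            = ((G.neighborFinset u).filter fun w => c w ≠ c u).erase v := by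
          ext w
          by_cases hw : w = v
          · subst hw
            have : ¬ (c' w ≠ c' u) := by
              rw [hvv, hcu']
              cases hcv : c w <;> cases hcu2 : c u <;> simp_all
            simp [this]
          · simp [Finset.mem_erase, hw, hne w hw, hcu']
        have hvmem : v ∈ ((G.neighborFinset u).filter fun w => c w ≠ c u) := by
          simp [hadj, hsame]
        have h1 : 1 ≤ ((G.neighborFinset u).filter fun w => c w ≠ c u).card :=
          Finset.card_pos.mpr ⟨v, hvmem⟩
        rw [hset, Finset.card_erase_of_mem hvmem]
        omega
    · rw [if_neg hadj]
      have hset : ((G.neighborFinset u).filter fun w => c' w ≠ c' u)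
          = ((G.neighborFinset u).filter fun w => c w ≠ c u) := by
        apply Finset.filter_congr
        intro w hw
        have hwv : w ≠ v := by rintro rfl; exact hadj hw
        rw [hne w hwv, hcu']
      rw [hset]; push_cast; ring
  -- splitting the sums
  have hsplit : ∀ d : V → Bool,
      cutF G d = ((G.neighborFinset v).filter fun w => d w ≠ d v).card
        + ∑ u ∈ univ.erase v, ((G.neighborFinset u).filter fun w => d w ≠ d u).card := by
    intro d
    simp only [cutF, diffNb]
    rw [← Finset.add_sum_erase _ _ (Finset.mem_univ v)]
  -- sum of the correction terms
  have hsub : G.neighborFinset v ⊆ univ.erase v := by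
    intro u hu
    have : u ≠ v := by rintro rfl; exact hvnot hu
    simp [Finset.mem_erase, this]
  have hδ : ∑ u ∈ univ.erase v,
      (if v ∈ G.neighborFinset u then (if c v = c u then (1 : ℤ) else -1) else 0)
      = (sameNb G c v : ℤ) - diffNb G c v := by
    rw [← Finset.sum_subset hsub (fun u _ hu => by
      have : v ∉ G.neighborFinset u := by
        simp only [SimpleGraph.mem_neighborFinset] at hu ⊢
        intro h; exact hu h.symm
      rw [if_neg this])]
    have : ∀ u ∈ G.neighborFinset v,
        (if v ∈ G.neighborFinset u then (if c v = c u then (1 : ℤ) else -1) else 0)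
          = (if c u = c v then (1 : ℤ) else -1) := by
      intro u hu
      have : v ∈ G.neighborFinset u := by
        simp only [SimpleGraph.mem_neighborFinset] at hu ⊢
        exact hu.symm
      rw [if_pos this]
      by_cases h : c u = c v
      · rw [if_pos h.symm, if_pos h]
      · rw [if_neg (fun hh => h hh.symm), if_neg h]
    rw [Finset.sum_congr rfl this,
      ← Finset.sum_filter_add_sum_filter_not (G.neighborFinset v) (fun u => c u = c v)]
    have h1 : ∑ u ∈ (G.neighborFinset v).filter (fun u => c u = c v),
        (if c u = c v then (1 : ℤ) else -1) = (sameNb G c v : ℤ) := by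
      rw [Finset.sum_congr rfl (fun x hx => if_pos (Finset.mem_filter.mp hx).2)]
      simp [sameNb]
    have h2 : ∑ u ∈ (G.neighborFinset v).filter (fun u => ¬ c u = c v),
        (if c u = c v then (1 : ℤ) else -1) = -(diffNb G c v : ℤ) := by
      rw [Finset.sum_congr rfl (fun x hx => if_neg (Finset.mem_filter.mp hx).2)]
      simp [diffNb]
    rw [h1, h2]
    ring
  -- put it together over ℤ
  have hZ : (cutF G c' : ℤ) + 2 * diffNb G c v = cutF G c + 2 * sameNb G c v := by
    rw [hsplit c', hsplit c, htermv]
    push_cast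
    rw [Finset.sum_congr rfl (fun u hu => key u (Finset.mem_erase.mp hu).1)]
    rw [Finset.sum_add_distrib, hδ]
    have := same_add_diff G c v
    simp only [diffNb, sameNb] at *
    push_cast
    ring
  exact_mod_cast hZ

lemma cut_neg (d : V → Bool) : cutF G (fun w => !d w) = cutF G d := by
  unfold cutF diffNb
  refine Finset.sum_congr rfl fun u _ => ?_
  congr 1
  apply Finset.filter_congr
  intro w _
  cases hw : d w <;> cases hu : d u <;> simp [hw, hu]

lemma redC_neg (d : V → Bool) : redC (fun w => !d w) + redC d = Fintype.card V := by
  unfold redC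
  have : (univ.filter fun v => (!d v) = true) = univ.filter fun v => ¬ (d v = true) := by
    apply Finset.filter_congr; intro w _; cases d w <;> simp
  rw [this, add_comm]
  simpa using Finset.card_filter_add_card_filter_not
    (s := (univ : Finset V)) (p := fun v => d v = true)

lemma redC_update_true (c : V → Bool) (v : V) (h : c v = false) :
    redC (Function.update c v true) = redC c + 1 := by
  unfold redC
  have hset : (univ.filter fun w => Function.update c v true w = true)
      = insert v (univ.filter fun w => c w = true) := by
    ext w
    by_cases hw : w = v
    · subst hw; simp
    · simp [Function.update_of_ne hw, hw]
  rw [hset, Finset.card_insert_of_notMem (by simp [h])]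

lemma redC_update_false (c : V → Bool) (v : V) (h : c v = true) :
    redC (Function.update c v false) + 1 = redC c := by
  unfold redC
  have hset : (univ.filter fun w => Function.update c v false w = true)
      = (univ.filter fun w => c w = true).erase v := by
    ext w
    by_cases hw : w = v
    · subst hw; simp
    · simp [Function.update_of_ne hw, hw]
  have hvmem : v ∈ univ.filter fun w => c w = true := by simp [h]
  have h1 : 1 ≤ (univ.filter fun w => c w = true).card := Finset.card_pos.mpr ⟨v, hvmem⟩
  rw [hset, Finset.card_erase_of_mem hvmem]
  omega

end Aux

/-! ### Properties of a score-maximizing coloring -/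

section MaxColoring

variable (G : SimpleGraph V) [DecidableRel G.Adj] (c : V → Bool)
  (hmax : ∀ d : V → Bool, score G d ≤ score G c)

include hmax

/-- At a maximizer, no vertex has a strict same-color majority among its neighbors. -/
lemma max_no_strict_same (v : V) : 2 * sameNb G c v ≤ (G.neighborFinset v).card := by
  by_contra h
  push_neg at h
  have hsd := same_add_diff G c v
  have hflip := cut_flip G c v
  have hcut : cutF G c + 1 ≤ cutF G (Function.update c v (!c v)) := by omega
  have h1 : (Fintype.card V + 1) * (cutF G c + 1)
      ≤ (Fintype.card V + 1) * cutF G (Function.update c v (!c v)) :=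
    Nat.mul_le_mul_left _ hcut
  have h2 := hmax (Function.update c v (!c v))
  have h3 : redC c ≤ Fintype.card V := by
    simpa [redC] using Finset.card_filter_le (univ : Finset V) (fun v => c v = true)
  unfold score at h2
  rw [Nat.mul_add, Nat.mul_one] at h1
  omega

/-- At a maximizer, every blue vertex has a strict red majority among its neighbors. -/
lemma max_blue_strict (v : V) (hv : c v = false) :
    sameNb G c v ≠ diffNb G c v := by
  intro heq
  have hflip := cut_flip G c v
  have hcut : cutF G (Function.update c v (!c v)) = cutF G c := by omega
  have hup : Function.update c v (!c v) = Function.update c v true := by rw [hv]; rfl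
  have hred := redC_update_true c v hv
  have h2 := hmax (Function.update c v true)
  unfold score at h2
  rw [← hup, hcut] at h2
  rw [hup, hred] at h2
  omega

/-- At a maximizer with a global tie, every red vertex also has untied neighborhood. -/
lemma max_red_strict (htie : 2 * redC c = Fintype.card V) (v : V) (hv : c v = true) :
    sameNb G c v ≠ diffNb G c v := by
  intro heq
  have hflip := cut_flip G c v
  have hcut : cutF G (Function.update c v (!c v)) = cutF G c := by omega
  have hup : Function.update c v (!c v) = Function.update c v false := by rw [hv]; rfl
  rw [hup] at hcut
  -- consider the negation of the flipped coloring
  have hcut2 : cutF G (fun w => !(Function.update c v false w)) = cutF G c := by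
    rw [cut_neg]; exact hcut
  have hredneg := redC_neg (Function.update c v false) (V := V)
  have hredup := redC_update_false c v hv
  have h2 := hmax (fun w => !(Function.update c v false w))
  unfold score at h2
  rw [hcut2] at h2
  omega

end MaxColoring

/-! ### Majority helper lemmas -/

lemma maj_eq_some_true (c : V → Bool) (s : Finset V)
    (h : 2 * (s.filter fun v => c v = true).card > s.card) : maj c s = some true := by
  simp [maj, h]

lemma maj_ne_some_true (c : V → Bool) (s : Finset V)
    (h : ¬ 2 * (s.filter fun v => c v = true).card > s.card) : maj c s ≠ some true := by
  unfold maj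
  rw [if_neg h]
  split <;> simp

lemma maj_eq_some_false (c : V → Bool) (s : Finset V)
    (h : 2 * (s.filter fun v => c v = false).card > s.card) : maj c s = some false := by
  have hrb := red_add_blue c s
  unfold maj
  rw [if_neg (by omega), if_pos h]

lemma maj_ne_some_false (c : V → Bool) (s : Finset V)
    (h : ¬ 2 * (s.filter fun v => c v = false).card > s.card) : maj c s ≠ some false := by
  unfold maj
  rw [if_neg h]
  split <;> simp

lemma maj_eq_none (c : V → Bool) (s : Finset V)
    (h1 : ¬ 2 * (s.filter fun v => c v = true).card > s.card)
    (h2 : ¬ 2 * (s.filter fun v => c v = false).card > s.card) : maj c s = none := by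
  unfold maj
  rw [if_neg h1, if_neg h2]

/-! ### Main theorem -/

theorem majority_weak_majority_illusion_possible (G : SimpleGraph V) [DecidableRel G.Adj]
    [Nonempty V] :
    ∃ c : V → Bool,
      2 * (Finset.univ.filter fun i => weakIll G c i).card > Fintype.card V := by
  classical
  obtain ⟨c, -, hmax'⟩ := Finset.exists_max_image (univ : Finset (V → Bool)) (score G)
    ⟨fun _ => true, Finset.mem_univ _⟩
  have hmax : ∀ d : V → Bool, score G d ≤ score G c := fun d => hmax' d (Finset.mem_univ d)
  refine ⟨c, ?_⟩
  set n := Fintype.card V with hn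
  have hcardu : (univ : Finset V).card = n := Finset.card_univ
  have hrbu := red_add_blue c (univ : Finset V)
  -- per-vertex facts
  have hsame : ∀ v, 2 * sameNb G c v ≤ (G.neighborFinset v).card :=
    max_no_strict_same G c hmax
  have hsd : ∀ v, sameNb G c v + diffNb G c v = (G.neighborFinset v).card :=
    same_add_diff G c
  -- translate sameNb/diffNb to red/blue neighbor counts
  have hred_of_true : ∀ v, c v = true →
      ((G.neighborFinset v).filter fun w => c w = true).card = sameNb G c v := by
    intro v hv
    unfold sameNb
    congr 1
    apply Finset.filter_congr
    intro w _
    rw [hv]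
  have hblue_of_true : ∀ v, c v = true →
      ((G.neighborFinset v).filter fun w => c w = false).card = diffNb G c v := by
    intro v hv
    unfold diffNb
    congr 1
    apply Finset.filter_congr
    intro w _
    rw [hv]
    cases c w <;> simp
  have hblue_of_false : ∀ v, c v = false →
      ((G.neighborFinset v).filter fun w => c w = false).card = sameNb G c v := by
    intro v hv
    unfold sameNb
    congr 1
    apply Finset.filter_congr
    intro w _
    rw [hv]
  have hred_of_false : ∀ v, c v = false →
      ((G.neighborFinset v).filter fun w => c w = true).card = diffNb G c v := by
    intro v hv
    unfold diffNb
    congr 1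
    apply Finset.filter_congr
    intro w _
    rw [hv]
    cases c w <;> simp
  have hRu : (univ.filter fun v => c v = true).card = redC c := rfl
  rcases lt_trichotomy (2 * redC c) n with hlt | heq | hgt
  · -- global blue majority; every blue vertex sees a red majority
    have hglob : maj c (univ : Finset V) = some false := by
      apply maj_eq_some_false
      rw [hcardu]
      omega
    have hill : ∀ v, c v = false → weakIll G c v := by
      intro v hv
      have hstrict := max_blue_strict G c hmax v hv
      have hmajv : maj c (G.neighborFinset v) = some true := by
        apply maj_eq_some_true
        rw [hred_of_false v hv]
        have := hsame v
        have := hsd v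
        omega
      unfold weakIll
      rw [hglob, hmajv]
      simp
    have hsub : (univ.filter fun v => c v = false) ⊆ univ.filter fun i => weakIll G c i := by
      intro v hvmem
      rw [Finset.mem_filter] at hvmem ⊢
      exact ⟨hvmem.1, hill v hvmem.2⟩
    have := Finset.card_le_card hsub
    omega
  · -- global tie; every vertex sees an untied neighborhood
    have hglob : maj c (univ : Finset V) = none := by
      apply maj_eq_none <;> rw [hcardu] <;> omega
    have hill : ∀ v, weakIll G c v := by
      intro v
      unfold weakIll
      rw [hglob]
      cases hv : c v
      · have hstrict := max_blue_strict G c hmax v hv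
        have hmajv : maj c (G.neighborFinset v) = some true := by
          apply maj_eq_some_true
          rw [hred_of_false v hv]
          have := hsame v
          have := hsd v
          omega
        rw [hmajv]; simp
      · have hstrict := max_red_strict G c hmax heq v hv
        have hmajv : maj c (G.neighborFinset v) = some false := by
          apply maj_eq_some_false
          rw [hblue_of_true v hv]
          have := hsame v
          have := hsd v
          omega
        rw [hmajv]; simp
    have hfull : (univ.filter fun i => weakIll G c i) = univ :=
      Finset.filter_true_of_mem fun v _ => hill v
    rw [hfull, hcardu]
    have : 0 < n := Fintype.card_pos
    omega
  · -- global red majority; no red vertex sees a red majority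
    have hglob : maj c (univ : Finset V) = some true := by
      apply maj_eq_some_true
      rw [hcardu]
      omega
    have hill : ∀ v, c v = true → weakIll G c v := by
      intro v hv
      have hmajv : maj c (G.neighborFinset v) ≠ some true := by
        apply maj_ne_some_true
        rw [hred_of_true v hv]
        have := hsame v
        omega
      unfold weakIll
      rw [hglob]
      exact hmajv
    have hsub : (univ.filter fun v => c v = true) ⊆ univ.filter fun i => weakIll G c i := by
      intro v hvmem
      rw [Finset.mem_filter] at hvmem ⊢
      exact ⟨hvmem.1, hill v hvmem.2⟩
    have := Finset.card_le_card hsub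
    omega
end

section
/- For any proper 2-coloring of a finite simple graph G with no isolated vertices, either strictly more than half the vertices are under strict majority illusion, or (if the global count is a tie) every vertex is under weak-majority illusion. -/
open Finset

variable {V : Type*} [Fintype V] [DecidableEq V]

lemma maj_nbhd (G : SimpleGraph V) [DecidableRel G.Adj]
    (hpos : ∀ v : V, 0 < G.degree v) (c : V → Bool)
    (hproper : ∀ u v : V, G.Adj u v → c u ≠ c v) (i : V) :
    maj c (G.neighborFinset i) = some (!(c i)) := by
  have hall : ∀ v ∈ G.neighborFinset i, c v = !(c i) := by
    intro v hv
    rw [SimpleGraph.mem_neighborFinset] at hv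
    have := hproper i v hv
    cases h : c i <;> cases h' : c v <;> simp_all
  have hfull : (G.neighborFinset i).filter (fun v => c v = !(c i)) = G.neighborFinset i :=
    Finset.filter_eq_self.mpr (by simpa using hall)
  have hemp : (G.neighborFinset i).filter (fun v => c v = c i) = ∅ := by
    apply Finset.filter_eq_empty_iff.mpr
    intro v hv
    simp [hall v hv]
  have hpos' : 0 < (G.neighborFinset i).card := by
    rw [G.card_neighborFinset_eq_degree]; exact hpos i
  unfold maj
  cases h : c i <;> simp only [h, Bool.not_false, Bool.not_true] at hfull hemp ⊢
  · rw [hfull, if_pos (by omega)]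
  · rw [hemp]
    simp only [Finset.card_empty, Nat.mul_zero]
    simp only [hfull]
    split_ifs <;> simp_all <;> omega

theorem proper_two_coloring_dichotomy (G : SimpleGraph V) [DecidableRel G.Adj]
    (hpos : ∀ v : V, 0 < G.degree v) (c : V → Bool)
    (hproper : ∀ u v : V, G.Adj u v → c u ≠ c v) :
    2 * (Finset.univ.filter fun i => strictIll G c i).card > Fintype.card V ∨
      (maj c Finset.univ = none ∧ ∀ i : V, weakIll G c i) := by
  rcases hG : maj c Finset.univ with _ | b
  · right
    refine ⟨rfl, fun i => ?_⟩
    unfold weakIll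
    rw [hG, maj_nbhd G hpos c hproper i]
    simp
  · left
    have hb : 2 * (Finset.univ.filter fun v => c v = b).card > Fintype.card V := by
      unfold maj at hG
      split_ifs at hG with h1 h2
      · cases hG; simpa using h1
      · cases hG; simpa using h2
    have hsub : (Finset.univ.filter fun v => c v = b) ⊆
        (Finset.univ.filter fun i => strictIll G c i) := by
      intro i hi
      simp only [Finset.mem_filter, Finset.mem_univ, true_and] at hi ⊢
      refine ⟨?_, ?_, ?_⟩
      · rw [maj_nbhd G hpos c hproper i]; simp
      · rw [hG]; simp
      · rw [maj_nbhd G hpos c hproper i, hG, hi]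
        simp
    have := Finset.card_le_card hsub
    omega
end

section
/- If G is a finite simple graph with no isolated vertices that admits a proper 2-coloring and has an odd number of vertices, then there exists a 2-coloring under which strictly more than half of the vertices are under strict majority illusion. -/
open Finset

variable {V : Type*} [Fintype V] [DecidableEq V]

/-- If a proper 2-coloring has a strict true-majority, all true vertices are illuded. -/
lemma aux_ill (G : SimpleGraph V) [DecidableRel G.Adj]
    (hpos : ∀ v : V, 0 < G.degree v)
    (c : V → Bool) (hc : ∀ u v : V, G.Adj u v → c u ≠ c v)
    (hmaj : 2 * (Finset.univ.filter fun v => c v = true).card > Fintype.card V) :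
    2 * (Finset.univ.filter fun i => strictIll G c i).card > Fintype.card V := by
  have hglob : maj c Finset.univ = some true := by
    unfold maj
    rw [if_pos (by simpa [Finset.card_univ] using hmaj)]
  have hill : ∀ i : V, c i = true → strictIll G c i := by
    intro i hi
    have h1 : (G.neighborFinset i).filter (fun v => c v = true) = ∅ := by
      ext v
      simp only [Finset.mem_filter, SimpleGraph.mem_neighborFinset, Finset.notMem_empty,
        iff_false, not_and]
      intro hadj hv
      exact hc i v hadj (hi.trans hv.symm)
    have h2 : (G.neighborFinset i).filter (fun v => c v = false) = G.neighborFinset i := by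
      apply Finset.filter_true_of_mem
      intro v hv
      rw [SimpleGraph.mem_neighborFinset] at hv
      have := hc i v hv
      rw [hi] at this
      cases hcv : c v
      · rfl
      · exact absurd hcv.symm this
    have hd : 0 < (G.neighborFinset i).card := by
      rw [G.card_neighborFinset_eq_degree]; exact hpos i
    have hnbr : maj c (G.neighborFinset i) = some false := by
      unfold maj
      rw [if_neg, if_pos]
      · rw [h2]; omega
      · rw [h1]; simp
    refine ⟨by rw [hnbr]; simp, by rw [hglob]; simp, by rw [hnbr, hglob]; simp⟩
  have hsub : (Finset.univ.filter fun v => c v = true) ⊆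
      (Finset.univ.filter fun i => strictIll G c i) := by
    intro v hv
    simp only [Finset.mem_filter, Finset.mem_univ, true_and] at hv ⊢
    exact hill v hv
  have := Finset.card_le_card hsub
  omega

theorem two_colorable_odd_majority_majority (G : SimpleGraph V) [DecidableRel G.Adj]
    (hpos : ∀ v : V, 0 < G.degree v)
    (hcol : ∃ c : V → Bool, ∀ u v : V, G.Adj u v → c u ≠ c v)
    (hodd : Odd (Fintype.card V)) :
    ∃ c : V → Bool,
      2 * (Finset.univ.filter fun i => strictIll G c i).card > Fintype.card V := by
  obtain ⟨c, hc⟩ := hcol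
  have hsplit : (Finset.univ.filter fun v => c v = true).card
      + (Finset.univ.filter fun v => c v = false).card = Fintype.card V := by
    have h := Finset.card_filter_add_card_filter_not
      (s := (Finset.univ : Finset V)) (p := fun v => c v = true)
    have h2 : (Finset.univ.filter fun v => ¬ c v = true) =
        (Finset.univ.filter fun v => c v = false) := by
      apply Finset.filter_congr
      intro v _
      cases hv : c v <;> simp
    rw [h2, Finset.card_univ] at h
    exact h
  obtain ⟨k, hk⟩ := hodd
  by_cases h : 2 * (Finset.univ.filter fun v => c v = true).card > Fintype.card V
  · exact ⟨c, aux_ill G hpos c hc h⟩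
  · refine ⟨fun v => !c v, aux_ill G hpos _ (fun u v huv h' => hc u v huv (by
      cases hu : c u <;> cases hv : c v <;> simp_all)) ?_⟩
    have : (Finset.univ.filter fun v => (!c v) = true) =
        (Finset.univ.filter fun v => c v = false) := by
      apply Finset.filter_congr
      intro v _
      cases h : c v <;> simp
    rw [this]
    omega
end

section
/- No 2-regular finite simple graph admits a 2-coloring under which at least half of the vertices are under strict majority illusion. -/
open Finset

variable {V : Type*} [Fintype V] [DecidableEq V]

lemma maj_spec {c : V → Bool} {s : Finset V} {b : Bool}
    (h : maj c s = some b) : s.card < 2 * (s.filter fun v => c v = b).card := by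
  unfold maj at h
  split_ifs at h with h1 h2
  · simp only [Option.some.injEq] at h; subst h; omega
  · simp only [Option.some.injEq] at h; subst h; omega

theorem two_regular_no_weak_majority_majority (G : SimpleGraph V) [DecidableRel G.Adj]
    [Nonempty V] (hreg : ∀ v : V, G.degree v = 2) (c : V → Bool) :
    2 * (Finset.univ.filter fun i => strictIll G c i).card < Fintype.card V := by
  classical
  set I := Finset.univ.filter fun i => strictIll G c i with hI
  rcases Finset.eq_empty_or_nonempty I with hIe | ⟨i0, hi0⟩
  · rw [hIe]; simpa using Fintype.card_pos
  · have hstr := (Finset.mem_filter.mp hi0).2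
    obtain ⟨b, hb⟩ : ∃ b, maj c Finset.univ = some b := by
      cases hmaj : maj c Finset.univ
      · exact absurd hmaj hstr.2.1
      · exact ⟨_, rfl⟩
    set m := !b with hm
    set Min := Finset.univ.filter fun v => c v = m with hMin
    have hglob := maj_spec hb
    rw [Finset.card_univ] at hglob
    have hcomp : (Finset.univ.filter fun v => c v = b).card + Min.card = Fintype.card V := by
      rw [hMin]
      have heq : (Finset.univ.filter fun v => c v = m) =
          (Finset.univ.filter fun v => ¬ (c v = b)) := by
        apply Finset.filter_congr
        intro v _
        cases b <;> cases hcv : c v <;> simp [hm]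
      rw [heq, Finset.card_filter_add_card_filter_not, Finset.card_univ]
    have hsize : 2 * Min.card < Fintype.card V := by omega
    -- each illusioned vertex has both its neighbors in Min
    have key : ∀ i ∈ I, Min.filter (G.Adj i) = G.neighborFinset i := by
      intro i hi
      have hs := (Finset.mem_filter.mp hi).2
      obtain ⟨b', hb'⟩ : ∃ b', maj c (G.neighborFinset i) = some b' := by
        cases hmaj : maj c (G.neighborFinset i)
        · exact absurd hmaj hs.1
        · exact ⟨_, rfl⟩
      have hbb : b' = m := by
        have hne : b' ≠ b := by
          intro h; subst h; exact hs.2.2 (hb'.trans hb.symm)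
        cases b <;> cases b' <;> simp_all [hm]
      have hnb := maj_spec hb'
      have hcardN : (G.neighborFinset i).card = 2 := by
        rw [G.card_neighborFinset_eq_degree, hreg i]
      have hle : ((G.neighborFinset i).filter fun v => c v = b').card ≤
          (G.neighborFinset i).card := Finset.card_filter_le _ _
      have heqc : ((G.neighborFinset i).filter fun v => c v = b').card =
          (G.neighborFinset i).card := by omega
      have hfull : (G.neighborFinset i).filter (fun v => c v = b') =
          G.neighborFinset i :=
        Finset.eq_of_subset_of_card_le (Finset.filter_subset _ _) (le_of_eq heqc.symm)
      have hall : ∀ j ∈ G.neighborFinset i, c j = m := by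
        intro j hj
        rw [← hbb]
        have hj' : j ∈ (G.neighborFinset i).filter (fun v => c v = b') := by
          rw [hfull]; exact hj
        exact (Finset.mem_filter.mp hj').2
      ext j
      simp only [Finset.mem_filter, hMin, Finset.mem_univ, true_and,
        SimpleGraph.mem_neighborFinset]
      constructor
      · rintro ⟨-, h⟩; exact h
      · intro h; exact ⟨hall j (by rwa [SimpleGraph.mem_neighborFinset]), h⟩
    -- double counting
    have hsum : ∑ i : V, (Min.filter (G.Adj i)).card = 2 * Min.card := by
      simp only [Finset.card_filter]
      rw [Finset.sum_comm]
      have hj : ∀ j ∈ Min, (∑ i : V, if G.Adj i j then 1 else 0) = 2 := by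
        intro j _
        have hfe : (Finset.univ.filter fun i => G.Adj i j) = G.neighborFinset j := by
          ext i
          simp [SimpleGraph.mem_neighborFinset, SimpleGraph.adj_comm]
        rw [← Finset.card_filter, hfe, G.card_neighborFinset_eq_degree, hreg j]
      rw [Finset.sum_congr rfl hj, Finset.sum_const, smul_eq_mul, mul_comm]
    have hIsum : 2 * I.card ≤ ∑ i : V, (Min.filter (G.Adj i)).card := by
      calc 2 * I.card = ∑ _i ∈ I, 2 := by rw [Finset.sum_const, smul_eq_mul, mul_comm]
        _ = ∑ i ∈ I, (Min.filter (G.Adj i)).card := by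
            refine Finset.sum_congr rfl fun i hi => ?_
            rw [key i hi, G.card_neighborFinset_eq_degree, hreg i]
        _ ≤ ∑ i : V, (Min.filter (G.Adj i)).card :=
            Finset.sum_le_sum_of_subset (Finset.subset_univ I)
    omega
end

section
/- If a k-regular finite simple graph on n vertices with n and k both even admits a 2-coloring in which at least one vertex is under strict majority illusion, then k ≤ n − 4. -/
open Finset

variable {V : Type*} [Fintype V] [DecidableEq V]

lemma maj_some {c : V → Bool} {s : Finset V} {b : Bool} (h : maj c s = some b) :
    2 * (s.filter fun v => c v = b).card > s.card := by
  unfold maj at h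
  split_ifs at h with h1 h2
  · obtain rfl : b = true := by simpa using h.symm
    exact h1
  · obtain rfl : b = false := by simpa using h.symm
    exact h2

theorem regular_even_even_degree_bound (G : SimpleGraph V) [DecidableRel G.Adj] (k : ℕ)
    (hreg : ∀ v : V, G.degree v = k)
    (hn : Even (Fintype.card V)) (hk : Even k)
    (h : ∃ c : V → Bool, ∃ i : V, strictIll G c i) :
    k + 4 ≤ Fintype.card V := by
  obtain ⟨c, i, h1, h2, h3⟩ := h
  obtain ⟨b, hb⟩ := Option.ne_none_iff_exists'.mp h1
  obtain ⟨b', hb'⟩ := Option.ne_none_iff_exists'.mp h2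
  have hbb : b ≠ b' := by
    intro e; apply h3; rw [hb, hb', e]
  have hA := maj_some hb
  have hB := maj_some hb'
  rw [SimpleGraph.card_neighborFinset_eq_degree, hreg i] at hA
  have hsub : ((G.neighborFinset i).filter fun v => c v = b).card ≤
      (Finset.univ.filter fun v => c v = b).card :=
    Finset.card_le_card (Finset.filter_subset_filter _ (Finset.subset_univ _))
  have hdisj : Disjoint (Finset.univ.filter fun v => c v = b)
      (Finset.univ.filter fun v => c v = b') := by
    apply Finset.disjoint_filter_filter'
    intro p hp hp' v hv
    exact absurd ((hp v hv).symm.trans (hp' v hv)) hbb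
  have hsum : (Finset.univ.filter fun v => c v = b).card +
      (Finset.univ.filter fun v => c v = b').card ≤ Fintype.card V := by
    rw [← Finset.card_union_of_disjoint hdisj]
    exact Finset.card_le_univ _
  rw [Finset.card_univ] at hB
  obtain ⟨m, hm⟩ := hn
  obtain ⟨l, hl⟩ := hk
  omega
end

section
/- If a k-regular finite simple graph on n vertices, with exactly one of n and k even, admits a 2-coloring in which at least one vertex is under strict majority illusion, then k ≤ n − 3. -/
open Finset

variable {V : Type*} [Fintype V] [DecidableEq V]

theorem regular_mixed_parity_degree_bound (G : SimpleGraph V) [DecidableRel G.Adj] (k : ℕ)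
    (hreg : ∀ v : V, G.degree v = k)
    (hpar : (Even (Fintype.card V) ∧ Odd k) ∨ (Odd (Fintype.card V) ∧ Even k))
    (h : ∃ c : V → Bool, ∃ i : V, strictIll G c i) :
    k + 3 ≤ Fintype.card V := by

  obtain ⟨c, i, hN, hU, hne⟩ := h
  have hdeg := hreg i
  have hk1 : k + 1 ≤ Fintype.card V := by
    have := G.degree_lt_card_verts i
    omega
  have hkn : k + 1 ≠ Fintype.card V := by
    intro hkn
    have hNset : G.neighborFinset i = Finset.univ.erase i := by
      apply Finset.eq_of_subset_of_card_le
      · intro v hv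
        have hadj : G.Adj i v := by rwa [SimpleGraph.mem_neighborFinset] at hv
        exact Finset.mem_erase.2 ⟨(G.ne_of_adj hadj).symm, Finset.mem_univ v⟩
      · rw [Finset.card_erase_of_mem (Finset.mem_univ i), Finset.card_univ,
          G.card_neighborFinset_eq_degree, hdeg]
        omega
    have hfilt : ∀ s : Finset V, (s.filter fun v => c v = true).card
        + (s.filter fun v => c v = false).card = s.card := by
      intro s
      have := Finset.card_filter_add_card_filter_not (s := s)
        (p := fun v => c v = true)
      simpa using this
    have h1 : ((Finset.univ.erase i).filter fun v => c v = true).card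
        ≤ (Finset.univ.filter fun v => c v = true).card :=
      Finset.card_le_card (Finset.filter_subset_filter _ (Finset.erase_subset _ _))
    have h2 : ((Finset.univ.erase i).filter fun v => c v = false).card
        ≤ (Finset.univ.filter fun v => c v = false).card :=
      Finset.card_le_card (Finset.filter_subset_filter _ (Finset.erase_subset _ _))
    have h3 := hfilt Finset.univ
    have h4 := hfilt (Finset.univ.erase i)
    have hUcard : (Finset.univ : Finset V).card = Fintype.card V := Finset.card_univ
    have hNcard : (Finset.univ.erase i).card = Fintype.card V - 1 := by
      rw [Finset.card_erase_of_mem (Finset.mem_univ i), hUcard]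
    rw [hNset] at hN hne
    unfold maj at hN hU hne
    split_ifs at hN hU hne <;>
      first
        | exact absurd rfl hN
        | exact absurd rfl hU
        | exact absurd rfl hne
        | omega
  have hk2 : k + 2 ≤ Fintype.card V := by omega
  rcases hpar with ⟨he, ho⟩ | ⟨ho, he⟩ <;>
  · rcases he with ⟨a, ha⟩
    rcases ho with ⟨b, hb⟩
    omega
end

section
/- Let G be a k-regular graph on n vertices with n odd, k even, and k ≥ 3 (hence k ≥ 4). If G admits a 2-coloring under which strictly more than half of the vertices are under strict majority illusion, then n ≥ (3k+2)/(k−2). -/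
open Finset

variable {V : Type*} [Fintype V] [DecidableEq V]

lemma double_count_aux (G : SimpleGraph V) [DecidableRel G.Adj] (k : ℕ)
    (hreg : ∀ v : V, G.degree v = k) (B I : Finset V) :
    ∑ i ∈ I, (B.filter (fun v => G.Adj i v)).card ≤ B.card * k := by
  have h1 : ∑ i ∈ I, (B.filter (fun v => G.Adj i v)).card
      = ∑ v ∈ B, ∑ i ∈ I, (if G.Adj i v then 1 else 0) := by
    rw [Finset.sum_comm]
    refine Finset.sum_congr rfl fun i _ => ?_
    rw [Finset.card_filter]
  rw [h1]
  calc ∑ v ∈ B, ∑ i ∈ I, (if G.Adj i v then 1 else 0)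
      ≤ ∑ v ∈ B, ∑ i ∈ (univ : Finset V), (if G.Adj i v then 1 else 0) := by
        refine Finset.sum_le_sum fun v _ => ?_
        exact Finset.sum_le_sum_of_subset (Finset.subset_univ I)
    _ = ∑ v ∈ B, k := by
        refine Finset.sum_congr rfl fun v _ => ?_
        rw [← Finset.card_filter]
        have h2 : (univ.filter fun i => G.Adj i v) = G.neighborFinset v := by
          ext i; simp [SimpleGraph.mem_neighborFinset, G.adj_comm]
        rw [h2, ← hreg v]
        rfl
    _ = B.card * k := by rw [Finset.sum_const, smul_eq_mul]

lemma illusion_aux (G : SimpleGraph V) [DecidableRel G.Adj] (k : ℕ)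
    (hreg : ∀ v : V, G.degree v = k) (hn : Odd (Fintype.card V)) (hk : Even k)
    (hk3 : 3 ≤ k) (c : V → Bool) (b : Bool)
    (hmaj : 2 * (univ.filter fun v => c v = b).card > Fintype.card V)
    (I : Finset V) (hIcard : 2 * I.card > Fintype.card V)
    (hIneigh : ∀ i ∈ I, 2 * ((G.neighborFinset i).filter fun v => c v = !b).card > k) :
    (Fintype.card V : ℚ) ≥ (3 * k + 2) / (k - 2) := by
  set n := Fintype.card V with hn'
  set B := (univ.filter fun v => c v = !b) with hB
  have hpart : (univ.filter fun v => c v = b).card + B.card = n := by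
    rw [hB]
    have h2 : (univ.filter fun v => c v = !b)
        = univ.filter (fun v => ¬ (c v = b)) := by
      apply Finset.filter_congr
      intro v _
      cases b <;> cases hcv : c v <;> simp [hcv]
    rw [h2, Finset.card_filter_add_card_filter_not, Finset.card_univ]
  have hBn : 2 * B.card < n := by omega
  have hstep : ∀ i ∈ I, k + 2 ≤ 2 * (B.filter (fun v => G.Adj i v)).card := by
    intro i hi
    have h1 := hIneigh i hi
    have heq : ((G.neighborFinset i).filter fun v => c v = !b)
        = B.filter (fun v => G.Adj i v) := by
      ext v
      simp only [hB, SimpleGraph.mem_neighborFinset, Finset.mem_filter,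
        Finset.mem_univ, true_and]
      tauto
    rw [heq] at h1
    obtain ⟨m, hm⟩ := hk
    omega
  have hsum : I.card * (k + 2) ≤ 2 * (B.card * k) := by
    calc I.card * (k+2) = ∑ _i ∈ I, (k+2) := by rw [Finset.sum_const, smul_eq_mul]
      _ ≤ ∑ i ∈ I, 2 * (B.filter (fun v => G.Adj i v)).card := Finset.sum_le_sum hstep
      _ = 2 * ∑ i ∈ I, (B.filter (fun v => G.Adj i v)).card := by rw [Finset.mul_sum]
      _ ≤ 2 * (B.card * k) := by
          have := double_count_aux G k hreg B I
          omega
  have hnat1 : (n + 1) * (k + 2) ≤ 2 * (2 * B.card) * k := by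
    have h2I : n + 1 ≤ 2 * I.card := hIcard
    calc (n + 1) * (k + 2) ≤ 2 * I.card * (k + 2) := Nat.mul_le_mul_right _ h2I
      _ = 2 * (I.card * (k + 2)) := by ring
      _ ≤ 2 * (2 * (B.card * k)) := by omega
      _ = 2 * (2 * B.card) * k := by ring
  -- pass to ℚ
  have hq1 : ((n : ℚ) + 1) * (k + 2) ≤ 2 * (2 * (B.card : ℚ)) * k := by
    exact_mod_cast hnat1
  have hq2 : 2 * (B.card : ℚ) ≤ (n : ℚ) - 1 := by
    have : 2 * B.card + 1 ≤ n := hBn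
    have := (Nat.cast_le (α := ℚ)).mpr this
    push_cast at this
    linarith
  have hkq : (3 : ℚ) ≤ (k : ℚ) := by exact_mod_cast hk3
  have hq3 : ((n : ℚ) + 1) * (k + 2) ≤ 2 * ((n : ℚ) - 1) * k := by
    have h4 : 2 * (2 * (B.card : ℚ)) * k ≤ 2 * ((n : ℚ) - 1) * k := by
      nlinarith
    linarith
  rw [ge_iff_le, div_le_iff₀ (by linarith : (0:ℚ) < (k : ℚ) - 2)]
  nlinarith [hq3]

theorem regular_odd_even_majority_majority_bound (G : SimpleGraph V) [DecidableRel G.Adj]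
    (k : ℕ) (hreg : ∀ v : V, G.degree v = k)
    (hn : Odd (Fintype.card V)) (hk : Even k) (hk3 : 3 ≤ k)
    (h : ∃ c : V → Bool,
      2 * (Finset.univ.filter fun i => strictIll G c i).card > Fintype.card V) :
    (Fintype.card V : ℚ) ≥ (3 * k + 2) / (k - 2) := by
  obtain ⟨c, hc⟩ := h
  set I := univ.filter fun i => strictIll G c i with hI
  have hn1 : 1 ≤ Fintype.card V := by
    rcases hn with ⟨m, hm⟩; omega
  have hIne : I.Nonempty := by
    rw [← Finset.card_pos]; omega
  obtain ⟨i0, hi0⟩ := hIne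
  have hs0 : strictIll G c i0 := (Finset.mem_filter.mp hi0).2
  cases hb : maj c univ with
  | none => exact absurd hb hs0.2.1
  | some b =>
    apply illusion_aux G k hreg hn hk hk3 c b ?_ I hc ?_
    · -- global majority
      unfold maj at hb
      rw [Finset.card_univ] at hb
      split_ifs at hb with h1 h2
      all_goals first
        | (injection hb with hb'; subst hb'; assumption)
        | exact Option.noConfusion hb
    · intro i hi
      have hs : strictIll G c i := (Finset.mem_filter.mp hi).2
      have h1 := hs.1
      have h3 := hs.2.2
      rw [hb] at h3
      have hcard : (G.neighborFinset i).card = k := by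
        rw [← hreg i]; rfl
      unfold maj at h1 h3
      split_ifs at h1 h3 with hc1 hc2
      · have hbf : b = false := by
          cases b
          · rfl
          · simp at h3
        subst hbf
        simpa [hcard] using hc1
      · have hbt : b = true := by
          cases b
          · simp at h3
          · rfl
        subst hbt
        simpa [hcard] using hc2
      · exact absurd rfl h1
end

section
/- In a 2-colored graph under a weak majority 2-coloring with a strict global majority color, every vertex of the globally-majority color with at least one neighbor is under weak-majority illusion; consequently more than half of all vertices are under weak-majority illusion. -/
open Finset

variable {V : Type*} [Fintype V] [DecidableEq V]

theorem weak_majority_coloring_gives_illusion (G : SimpleGraph V) [DecidableRel G.Adj]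
    (hpos : ∀ v : V, 0 < G.degree v) (c : V → Bool)
    (hwmc : ∀ v : V,
      ((G.neighborFinset v).filter fun w => c w = c v).card ≤
        ((G.neighborFinset v).filter fun w => c w ≠ c v).card)
    (hred : 2 * (Finset.univ.filter fun v => c v = true).card > Fintype.card V) :
    (∀ i : V, c i = true → weakIll G c i) ∧
    2 * (Finset.univ.filter fun i => weakIll G c i).card > Fintype.card V := by
  have hmajU : maj c Finset.univ = some true := by
    unfold maj
    rw [if_pos (by simpa [Finset.card_univ] using hred)]
  have hfirst : ∀ i : V, c i = true → weakIll G c i := by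
    intro i hi
    unfold weakIll
    rw [hmajU]
    set s := G.neighborFinset i with hs
    have hsplit : (s.filter fun w => c w = true).card +
        (s.filter fun w => c w = false).card = s.card := by
      have h := Finset.card_filter_add_card_filter_not (s := s)
        (p := fun w => c w = true)
      have he : (s.filter fun w => ¬ c w = true) = (s.filter fun w => c w = false) := by
        apply Finset.filter_congr; intro w _; simp
      rw [he] at h
      exact h
    have hle : (s.filter fun w => c w = true).card ≤
        (s.filter fun w => c w = false).card := by
      have := hwmc i
      rw [hi] at this
      calc (s.filter fun w => c w = true).card
          = (s.filter fun w => c w = true).card := rfl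
        _ ≤ (s.filter fun w => c w ≠ true).card := this
        _ = (s.filter fun w => c w = false).card := by
            congr 1; apply Finset.filter_congr; intro w _; simp
    have hnot : ¬ 2 * (s.filter fun w => c w = true).card > s.card := by
      omega
    unfold maj
    rw [if_neg hnot]
    split <;> simp
  refine ⟨hfirst, ?_⟩
  have hsub : (Finset.univ.filter fun v => c v = true) ⊆
      (Finset.univ.filter fun i => weakIll G c i) := by
    intro v hv
    simp only [Finset.mem_filter, Finset.mem_univ, true_and] at hv ⊢
    exact hfirst v hv
  have := Finset.card_le_card hsub
  omega
end
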